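/- Let F be a field, k < n, and suppose (n-k) divides δ; set ν = δ/(n-k) and L = ⌊δ/k⌋ + δ/(n-k). Let H(z) = Σ_{i=0}^{ν} H_i z^i ∈ F[z]^{(n-k)×n}. Define the L-th truncated sliding parity-check matrix H_L^c ∈ F^{(L+1)(n-k)×(L+1)n} as the lower block-triangular matrix with (i,j)-block H_{i-j} (zero for i < j or i-j > ν). If every full-size minor of H_L^c formed by columns with indices t_1 < ... < t_{(L+1)(n-k)} satisfying t_{s(n-k)+1} ≤ sn for s = 1,...,L is nonzero, then H(z) is left prime. -/

import Mathlib

open Polynomial Matrix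

/-- A polynomial matrix `H` is left prime if in every factorization `H = M * H'`
with `M` square polynomial, the left factor `M` is unimodular (a unit). -/
def IsLeftPrimeMat {F : Type*} [Field F] {p q : ℕ}
    (H : Matrix (Fin p) (Fin q) (Polynomial F)) : Prop :=
  ∀ (M : Matrix (Fin p) (Fin p) (Polynomial F))
    (H' : Matrix (Fin p) (Fin q) (Polynomial F)),
    H = M * H' → IsUnit M

/-- If `(n-k) ∣ δ`, `ν = δ/(n-k)`, `L = ⌊δ/k⌋ + δ/(n-k)`, and every
non-trivially-zero full-size minor of the `L`-th truncated sliding parity-check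
matrix `H_L^c` (column indices `t_1 < … < t_{(L+1)(n-k)}` with
`t_{s(n-k)+1} ≤ sn` for `s = 1, …, L`) is nonzero, then `H(z)` is left prime. -/
theorem stmt5 {F : Type*} [Field F] (n k δ ν L : ℕ) (hk0 : 0 < k) (hk : k < n)
    (hδ : 0 < δ) (hdvd : (n - k) ∣ δ) (hν : ν = δ / (n - k))
    (hL : L = δ / k + δ / (n - k))
    (H : ℕ → Matrix (Fin (n - k)) (Fin n) F)
    (hHν : ∀ s, ν < s → H s = 0)
    (Hc : Matrix (Fin ((L + 1) * (n - k))) (Fin ((L + 1) * n)) F)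
    (hHc : ∀ (i : Fin ((L + 1) * (n - k))) (j : Fin ((L + 1) * n)),
      Hc i j =
        if (j : ℕ) / n ≤ (i : ℕ) / (n - k) then
          H ((i : ℕ) / (n - k) - (j : ℕ) / n)
            ⟨(i : ℕ) % (n - k), Nat.mod_lt _ (by omega)⟩
            ⟨(j : ℕ) % n, Nat.mod_lt _ (by omega)⟩
        else 0)
    (hminors : ∀ t : Fin ((L + 1) * (n - k)) → Fin ((L + 1) * n),
      StrictMono t →
      (∀ s, 1 ≤ s → s ≤ L →
        ∀ i : Fin ((L + 1) * (n - k)), (i : ℕ) = s * (n - k) → (t i : ℕ) < s * n) →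
      (Hc.submatrix id t).det ≠ 0) :
    ∀ HP : Matrix (Fin (n - k)) (Fin n) (Polynomial F),
      (∀ a b, HP a b = ∑ s ∈ Finset.range (ν + 1), Polynomial.C (H s a b) * Polynomial.X ^ s) →
      IsLeftPrimeMat HP := by
  intro HP hHP M Mfac hfac
  have hn : 0 < n := by omega
  have hnk : 0 < n - k := by omega
  have hδν : ν * (n - k) = δ := by rw [hν]; exact Nat.div_mul_cancel hdvd
  have hν1 : 1 ≤ ν := by
    rw [hν]; exact (Nat.one_le_div_iff hnk).mpr (Nat.le_of_dvd hδ hdvd)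
  have hLν : L = δ / k + ν := by omega
  have hmle : (L + 1) * (n - k) ≤ (L + 1) * n := Nat.mul_le_mul_left _ (by omega)
  have hq : δ < (δ / k + 1) * k := by
    calc δ = k * (δ / k) + δ % k := (Nat.div_add_mod δ k).symm
    _ < k * (δ / k) + k := by have := Nat.mod_lt δ hk0; omega
    _ = (δ / k + 1) * k := by ring
  have hmle2 : (L + 1) * (n - k) ≤ (δ / k + 1) * n := by
    have e1 : (L + 1) * (n - k) = (δ / k + 1) * (n - k) + ν * (n - k) := by
      rw [hLν]; ring
    have e2 : (δ / k + 1) * (n - k) + (δ / k + 1) * k = (δ / k + 1) * n := by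
      rw [← Nat.mul_add]; congr 1; omega
    linarith [e1, e2, hq, hδν]
  have hjL : ∀ j : ℕ, j < (L + 1) * (n - k) → j / n + ν ≤ L := by
    intro j hj
    have h1 : j < (δ / k + 1) * n := lt_of_lt_of_le hj hmle2
    have h2 : j / n < δ / k + 1 := (Nat.div_lt_iff_lt_mul hn).mpr h1
    omega
  -- column selection
  let t : Fin ((L + 1) * (n - k)) → Fin ((L + 1) * n) :=
    fun i => ⟨(i : ℕ), lt_of_lt_of_le i.2 hmle⟩
  have ht1 : StrictMono t := fun i j h => h
  have ht2 : ∀ s, 1 ≤ s → s ≤ L →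
      ∀ i : Fin ((L + 1) * (n - k)), (i : ℕ) = s * (n - k) → (t i : ℕ) < s * n := by
    intro s hs1 _ i hi
    have h5 : s * (n - k) + s * k = s * n := by rw [← Nat.mul_add]; congr 1; omega
    have h6 : 0 < s * k := Nat.mul_pos (by omega) hk0
    show (i : ℕ) < s * n
    omega
  have hdet := hminors t ht1 ht2
  have hAdet : IsUnit (Hc.submatrix id t).det := Ne.isUnit hdet
  have hx : ∀ a : Fin (n - k), ∃ xa : Fin ((L + 1) * (n - k)) → F,
      (Hc.submatrix id t) *ᵥ xa
        = fun i : Fin ((L + 1) * (n - k)) => if (i : ℕ) = (a : ℕ) then (1 : F) else 0 := by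
    intro a
    exact ⟨(Hc.submatrix id t)⁻¹ *ᵥ
        (fun i : Fin ((L + 1) * (n - k)) => if (i : ℕ) = (a : ℕ) then (1 : F) else 0), by
      rw [Matrix.mulVec_mulVec, Matrix.mul_nonsing_inv _ hAdet, Matrix.one_mulVec]⟩
  choose xv hxv using hx
  -- coefficients of HP
  have hHPc : ∀ (a' : Fin (n - k)) (b : Fin n) (d' : ℕ), (HP a' b).coeff d' = H d' a' b := by
    intro a' b d'
    rw [hHP a' b, Polynomial.finset_sum_coeff]
    simp only [Polynomial.coeff_C_mul, Polynomial.coeff_X_pow, mul_ite, mul_one, mul_zero]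
    rw [Finset.sum_ite_eq]
    by_cases h : d' ≤ ν
    · simp [Finset.mem_range, Nat.lt_succ_iff, h]
    · rw [hHν d' (by omega)]; simp
  -- construct the right inverse
  have hexists : ∃ R : Matrix (Fin n) (Fin (n - k)) (Polynomial F), HP * R = 1 := by
    refine ⟨Matrix.of fun b a => ∑ j : Fin ((L + 1) * (n - k)),
      if (⟨(j : ℕ) % n, Nat.mod_lt _ hn⟩ : Fin n) = b then
        Polynomial.C (xv a j) * Polynomial.X ^ ((j : ℕ) / n) else 0, ?_⟩
    ext a' a d
    rw [Matrix.mul_apply, Polynomial.finset_sum_coeff]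
    simp only [Matrix.of_apply]
    have h1 : ∀ b : Fin n,
        (HP a' b * ∑ j : Fin ((L + 1) * (n - k)),
          if (⟨(j : ℕ) % n, Nat.mod_lt _ hn⟩ : Fin n) = b then
            Polynomial.C (xv a j) * Polynomial.X ^ ((j : ℕ) / n) else 0).coeff d
        = ∑ j : Fin ((L + 1) * (n - k)),
            if (⟨(j : ℕ) % n, Nat.mod_lt _ hn⟩ : Fin n) = b then
              (if (j : ℕ) / n ≤ d then H (d - (j : ℕ) / n) a' b * xv a j else 0) else 0 := by
      intro b
      rw [Finset.mul_sum, Polynomial.finset_sum_coeff]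
      apply Finset.sum_congr rfl
      intro j _
      rw [mul_ite, mul_zero, apply_ite (fun p : Polynomial F => p.coeff d),
        Polynomial.coeff_zero]
      congr 1
      have h2 : HP a' b * (Polynomial.C (xv a j) * Polynomial.X ^ ((j : ℕ) / n))
          = (HP a' b * Polynomial.C (xv a j)) * Polynomial.X ^ ((j : ℕ) / n) := by ring
      rw [h2, Polynomial.coeff_mul_X_pow', Polynomial.coeff_mul_C, hHPc]
    simp only [h1]
    rw [Finset.sum_comm]
    have h3 : ∀ j : Fin ((L + 1) * (n - k)),
        (∑ b : Fin n, if (⟨(j : ℕ) % n, Nat.mod_lt _ hn⟩ : Fin n) = b then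
          (if (j : ℕ) / n ≤ d then H (d - (j : ℕ) / n) a' b * xv a j else 0) else 0)
        = if (j : ℕ) / n ≤ d then
            H (d - (j : ℕ) / n) a' ⟨(j : ℕ) % n, Nat.mod_lt _ hn⟩ * xv a j else 0 := by
      intro j
      rw [Finset.sum_ite_eq]
      simp
    simp only [h3]
    by_cases hdL : d ≤ L
    · -- the row picking out coefficient d, component a'
      have hiDlt : (a' : ℕ) + d * (n - k) < (L + 1) * (n - k) := by
        have h7 : d * (n - k) ≤ L * (n - k) := Nat.mul_le_mul_right _ hdL
        have h8 : (L + 1) * (n - k) = L * (n - k) + (n - k) := by ring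
        have := a'.isLt
        omega
      have hiD1 : ((a' : ℕ) + d * (n - k)) / (n - k) = d := by
        rw [Nat.add_mul_div_right _ _ hnk, Nat.div_eq_of_lt a'.isLt]
        omega
      have hiD2 : ((a' : ℕ) + d * (n - k)) % (n - k) = (a' : ℕ) := by
        rw [Nat.add_mul_mod_self_right]; exact Nat.mod_eq_of_lt a'.isLt
      have hAentry : ∀ j : Fin ((L + 1) * (n - k)),
          (Hc.submatrix id t) ⟨(a' : ℕ) + d * (n - k), hiDlt⟩ j
          = if (j : ℕ) / n ≤ d then
              H (d - (j : ℕ) / n) a' ⟨(j : ℕ) % n, Nat.mod_lt _ hn⟩ else 0 := by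
        intro j
        show Hc ⟨(a' : ℕ) + d * (n - k), hiDlt⟩ (t j) = _
        rw [hHc]
        have hv : ((t j : ℕ)) = (j : ℕ) := rfl
        simp only [hv, hiD1, hiD2]
      have hAx := congrFun (hxv a) ⟨(a' : ℕ) + d * (n - k), hiDlt⟩
      simp only [Matrix.mulVec, dotProduct] at hAx
      simp only [hAentry, ite_mul, zero_mul] at hAx
      rw [hAx]
      rw [Matrix.one_apply]
      by_cases hd0 : d = 0
      · subst hd0
        simp only [Nat.zero_mul, Nat.add_zero, Nat.mul_zero, zero_mul, add_zero]
        rw [apply_ite (fun p : Polynomial F => p.coeff 0)]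
        simp [Fin.ext_iff, Polynomial.coeff_one]
      · have hne : ¬((a' : ℕ) + d * (n - k) = (a : ℕ)) := by
          have h7 : 1 * (n - k) ≤ d * (n - k) := Nat.mul_le_mul_right _ (by omega)
          have := a.isLt
          omega
        rw [if_neg hne, apply_ite (fun p : Polynomial F => p.coeff d)]
        simp [Polynomial.coeff_one, hd0]
    · rw [Finset.sum_eq_zero]
      · rw [Matrix.one_apply, apply_ite (fun p : Polynomial F => p.coeff d)]
        simp [Polynomial.coeff_one, show d ≠ 0 by omega]
      · intro j _
        by_cases hjd : (j : ℕ) / n ≤ d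
        · rw [if_pos hjd, hHν (d - (j : ℕ) / n) (by have := hjL (j : ℕ) j.2; omega)]
          simp
        · rw [if_neg hjd]
  obtain ⟨R, hR⟩ := hexists
  have h1 : M * (Mfac * R) = 1 := by rw [← Matrix.mul_assoc, ← hfac, hR]
  exact (Matrix.isUnit_iff_isUnit_det M).mpr (Matrix.isUnit_det_of_right_inverse h1)
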